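/- Let V ∈ P({1,...,n}) be a pair partition and σ a cyclic permutation of {1,...,n} (say σ(i) = i+1 mod n). Then the relabeled pairing σ(V) is again a pair partition, and the integral ∫···∫ f_n(x_n)···f_1(x_1) Q_V^n(x) δ_V^n(x) dx is mapped bijectively to the corresponding integral for the cyclically shifted functions. Consequently Σ_{V ∈ P(S)} ∫ f_n(x_n)···f_1(x_1) Q_V^n(x) δ_V^n(x) dx = Σ_{V ∈ P(S)} ∫ f_1(x_1) f_n(x_n)···f_2(x_2) Q_V^n(x) δ_V^n(x) dx. -/

import Mathlib

open MeasureTheory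
open scoped Classical

noncomputable section

/-- A vector in the algebraic Fock space over functions on `ℝ^j`, given by its sequence of
`n`-particle wave functions. -/
def FockFun (j : ℕ) : Type :=
  (n : ℕ) → ((Fin n → EuclideanSpace ℝ (Fin j)) → ℝ)

/-- The `Q`-deformed creation operator (at the level of functions): `a⁺(h) f = h ⊗ f`. -/
def crOp (j : ℕ) (h : EuclideanSpace ℝ (Fin j) → ℝ) (F : FockFun j) : FockFun j :=
  fun n =>
    match n with
    | 0 => fun _ => 0
    | m + 1 => fun x => h (x 0) * F m (x ∘ Fin.succ)

/-- The `Q`-deformed annihilation operator (at the level of functions):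
`(a(h) F)ₙ (x₁,…,xₙ) = ∫_U h(y) Σ_{k=0}^{n} (Π_{m<k} Q(y,x_m)) Fₙ₊₁(x₁,…,x_k,y,x_{k+1},…,xₙ) dy`,
which is `l(h) R_Q^{(n+1)}` in the notation of the paper. -/
def anOp (j : ℕ) (U : Set (EuclideanSpace ℝ (Fin j)))
    (Q : EuclideanSpace ℝ (Fin j) → EuclideanSpace ℝ (Fin j) → ℝ)
    (h : EuclideanSpace ℝ (Fin j) → ℝ) (F : FockFun j) : FockFun j :=
  fun n x =>
    ∫ y in U, h y * ∑ k : Fin (n + 1),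
      (∏ m ∈ Finset.univ.filter (fun m : Fin n => (m : ℕ) < (k : ℕ)), Q y (x m)) *
        F (n + 1) (Fin.insertNth k y x)

/-- The vacuum vector `Ω`. -/
def vac (j : ℕ) : FockFun j := fun n _ => if n = 0 then 1 else 0

/-- The vacuum expectation `⟨F, Ω⟩_Q`, i.e. the `0`-particle component of `F`. -/
def vacExp (j : ℕ) (F : FockFun j) : ℝ := F 0 (fun i => i.elim0)

/-- `V` is a pair partition of `{0, …, n-1}`: every pair `(a, z) ∈ V` has `a < z`, and every
element belongs to exactly one pair. -/
def IsPairing (n : ℕ) (V : Finset (Fin n × Fin n)) : Prop :=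
  (∀ p ∈ V, p.1 < p.2) ∧
    ∀ k : Fin n, ∃! p : Fin n × Fin n, p ∈ V ∧ (p.1 = k ∨ p.2 = k)

/-- The set of crossings of a pairing: pairs of pairs `(a,z), (a',z')` with
`a < a' < z < z'`. -/
def crossings (n : ℕ) (V : Finset (Fin n × Fin n)) :
    Finset ((Fin n × Fin n) × (Fin n × Fin n)) :=
  (V ×ˢ V).filter (fun c => c.1.1 < c.2.1 ∧ c.2.1 < c.1.2 ∧ c.1.2 < c.2.2)

/-- The value `∫⋯∫ f_n(x_n)⋯f_1(x_1) Q_V^n(x) δ_V^n(x) dx₁⋯dxₙ` attached to a pairing `V`: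
the Dirac deltas identify the two variables of each pair, leaving one integration variable
per pair, the functions of the two legs of each pair are evaluated at that variable, and each
crossing contributes a factor of `Q`. -/
def pairingIntegral (j n : ℕ) (U : Set (EuclideanSpace ℝ (Fin j)))
    (Q : EuclideanSpace ℝ (Fin j) → EuclideanSpace ℝ (Fin j) → ℝ)
    (f : Fin n → (EuclideanSpace ℝ (Fin j) → ℝ))
    (V : Finset (Fin n × Fin n)) : ℝ :=
  ∫ x : {p // p ∈ V} → EuclideanSpace ℝ (Fin j) in {x | ∀ p, x p ∈ U},
    (∏ p : {p // p ∈ V}, f p.1.1 (x p) * f p.1.2 (x p)) *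
      ∏ c ∈ (crossings n V).attach,
        Q (x ⟨c.1.1, (Finset.mem_product.mp (Finset.mem_filter.mp c.2).1).1⟩)
          (x ⟨c.1.2, (Finset.mem_product.mp (Finset.mem_filter.mp c.2).1).2⟩)


/-- Cyclic relabeling of a pair: shift both legs by `1 (mod n)` and reorder so that the
smaller index comes first. -/
def rotatePair (n : ℕ) (p : Fin n × Fin n) : Fin n × Fin n :=
  let a := finRotate n p.1
  let z := finRotate n p.2
  if a ≤ z then (a, z) else (z, a)

def unrotatePair (n : ℕ) (p : Fin n × Fin n) : Fin n × Fin n :=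
  let a := (finRotate n).symm p.1
  let z := (finRotate n).symm p.2
  if a ≤ z then (a, z) else (z, a)

lemma rotVal {n : ℕ} (i : Fin n) : (finRotate n i).val = (i.val + 1) % n := by
  cases n with
  | zero => exact i.elim0
  | succ m =>
    rw [finRotate_succ_apply, Fin.add_def]
    simp [Nat.add_mod, Nat.mod_eq_of_lt i.isLt]

lemma rotVal_lt {n : ℕ} (i : Fin n) (h : i.val + 1 < n) : (finRotate n i).val = i.val + 1 := by
  rw [rotVal, Nat.mod_eq_of_lt h]

lemma rotVal_last {n : ℕ} (i : Fin n) (h : i.val + 1 = n) : (finRotate n i).val = 0 := by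
  rw [rotVal, h, Nat.mod_self]

lemma rotSymmVal {n : ℕ} (k : Fin n) :
    ((finRotate n).symm k).val = if k.val = 0 then n - 1 else k.val - 1 := by
  have h1 : (finRotate n (((finRotate n).symm k))).val = k.val := by
    rw [Equiv.apply_symm_apply]
  rw [rotVal] at h1
  have h2 : ((finRotate n).symm k).val < n := ((finRotate n).symm k).isLt
  have h3 : k.val < n := k.isLt
  rcases Nat.lt_or_ge (((finRotate n).symm k).val + 1) n with h | h
  · rw [Nat.mod_eq_of_lt h] at h1
    split <;> omega
  · have : ((finRotate n).symm k).val + 1 = n := by omega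
    rw [this, Nat.mod_self] at h1
    split <;> omega

lemma rotatePair_val {n : ℕ} (p : Fin n × Fin n) (h : p.1 < p.2) :
    ((rotatePair n p).1.val, (rotatePair n p).2.val) =
      if p.2.val + 1 = n then (0, p.1.val + 1) else (p.1.val + 1, p.2.val + 1) := by
  have h1 : p.1.val < p.2.val := h
  have h2 : p.2.val < n := p.2.isLt
  have ha : (finRotate n p.1).val = p.1.val + 1 := rotVal_lt _ (by omega)
  unfold rotatePair
  rcases Nat.eq_or_lt_of_le (Nat.succ_le_of_lt h2) with hl | hl
  · have hl' : p.2.val + 1 = n := by omega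
    have hz : (finRotate n p.2).val = 0 := rotVal_last _ hl'
    have : ¬ (finRotate n p.1 ≤ finRotate n p.2) := by
      rw [Fin.le_def]; omega
    simp only [this, if_neg, if_false]
    rw [if_pos hl']
    exact Prod.ext hz ha
  · have hz : (finRotate n p.2).val = p.2.val + 1 := rotVal_lt _ hl
    have : finRotate n p.1 ≤ finRotate n p.2 := by
      rw [Fin.le_def]; omega
    rw [if_pos this, if_neg (by omega)]
    exact Prod.ext ha hz

lemma unrotatePair_val {n : ℕ} (q : Fin n × Fin n) (h : q.1 < q.2) :
    ((unrotatePair n q).1.val, (unrotatePair n q).2.val) =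
      if q.1.val = 0 then (q.2.val - 1, n - 1) else (q.1.val - 1, q.2.val - 1) := by
  have h1 : q.1.val < q.2.val := h
  have h2 : q.2.val < n := q.2.isLt
  have ha := rotSymmVal q.1
  have hz := rotSymmVal q.2
  rw [if_neg (by omega)] at hz
  unfold unrotatePair
  by_cases h0 : q.1.val = 0
  · rw [if_pos h0] at ha
    have : ¬ ((finRotate n).symm q.1 ≤ (finRotate n).symm q.2) := by
      rw [Fin.le_def]; omega
    simp only [this, if_neg, if_false]
    rw [if_pos h0]
    exact Prod.ext hz ha
  · rw [if_neg h0] at ha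
    have : (finRotate n).symm q.1 ≤ (finRotate n).symm q.2 := by
      rw [Fin.le_def]; omega
    rw [if_pos this, if_neg h0]
    exact Prod.ext ha hz

lemma rotatePair_lt {n : ℕ} (p : Fin n × Fin n) (h : p.1 < p.2) :
    (rotatePair n p).1 < (rotatePair n p).2 := by
  have := rotatePair_val p h
  have h1 : p.1.val < p.2.val := h
  rw [Fin.lt_def]
  split at this <;> (rw [Prod.ext_iff] at this; omega)

lemma unrotatePair_lt {n : ℕ} (q : Fin n × Fin n) (h : q.1 < q.2) :
    (unrotatePair n q).1 < (unrotatePair n q).2 := by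
  have := unrotatePair_val q h
  have h1 : q.1.val < q.2.val := h
  have h2 : q.2.val < n := q.2.isLt
  rw [Fin.lt_def]
  split at this <;> (rw [Prod.ext_iff] at this; omega)

lemma unrot_rot {n : ℕ} (p : Fin n × Fin n) (h : p.1 < p.2) :
    unrotatePair n (rotatePair n p) = p := by
  have h1 : p.1.val < p.2.val := h
  have h2 : p.2.val < n := p.2.isLt
  have hr := rotatePair_val p h
  have hu := unrotatePair_val (rotatePair n p) (rotatePair_lt p h)
  rw [Prod.ext_iff] at hr ⊢
  rw [Prod.ext_iff] at hu
  rw [Fin.ext_iff, Fin.ext_iff]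
  split at hr <;> (simp only [Prod.ext_iff] at hr; split at hu <;> omega)

lemma rot_unrot {n : ℕ} (q : Fin n × Fin n) (h : q.1 < q.2) :
    rotatePair n (unrotatePair n q) = q := by
  have h1 : q.1.val < q.2.val := h
  have h2 : q.2.val < n := q.2.isLt
  have hu := unrotatePair_val q h
  have hr := rotatePair_val (unrotatePair n q) (unrotatePair_lt q h)
  rw [Prod.ext_iff] at hu ⊢
  rw [Prod.ext_iff] at hr
  rw [Fin.ext_iff, Fin.ext_iff]
  split at hu <;> (simp only [Prod.ext_iff] at hu; split at hr <;> omega)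

lemma pairing_image_perm {n : ℕ} (e : Equiv.Perm (Fin n))
    (P : (Fin n × Fin n) → Fin n × Fin n)
    (hP : ∀ p, P p = if e p.1 ≤ e p.2 then (e p.1, e p.2) else (e p.2, e p.1))
    (V : Finset (Fin n × Fin n)) (hV : IsPairing n V) :
    IsPairing n (V.image P) := by
  have hmem : ∀ (p : Fin n × Fin n) (k : Fin n),
      ((P p).1 = k ∨ (P p).2 = k) ↔ (p.1 = e.symm k ∨ p.2 = e.symm k) := by
    intro p k
    rw [hP]
    have l1 : e p.1 = k ↔ p.1 = e.symm k := by
      constructor <;> intro h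
      · simp [← h]
      · rw [h, Equiv.apply_symm_apply]
    have l2 : e p.2 = k ↔ p.2 = e.symm k := by
      constructor <;> intro h
      · simp [← h]
      · rw [h, Equiv.apply_symm_apply]
    split <;> simp only [← l1, ← l2] <;> tauto
  constructor
  · intro q hq
    obtain ⟨p, hp, rfl⟩ := Finset.mem_image.mp hq
    have hlt : p.1 < p.2 := hV.1 p hp
    have hne : e p.1 ≠ e p.2 := fun hc => absurd (e.injective hc) (ne_of_lt hlt)
    rw [hP]
    split_ifs with hle
    · exact lt_of_le_of_ne hle hne
    · exact lt_of_not_ge hle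
  · intro k
    obtain ⟨p, ⟨hpV, hpk⟩, huniq⟩ := hV.2 (e.symm k)
    refine ⟨P p, ⟨Finset.mem_image_of_mem _ hpV, (hmem p k).mpr hpk⟩, ?_⟩
    rintro q ⟨hq, hqk⟩
    obtain ⟨p', hp', rfl⟩ := Finset.mem_image.mp hq
    rw [hmem p' k] at hqk
    rw [huniq p' ⟨hp', hqk⟩]

def cyc (n : ℕ) (c : (Fin n × Fin n) × (Fin n × Fin n)) :
    (Fin n × Fin n) × (Fin n × Fin n) :=
  if finRotate n c.2.1 ≤ finRotate n c.2.2 then (rotatePair n c.1, rotatePair n c.2)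
  else (rotatePair n c.2, rotatePair n c.1)

def cycInv (n : ℕ) (c : (Fin n × Fin n) × (Fin n × Fin n)) :
    (Fin n × Fin n) × (Fin n × Fin n) :=
  if (finRotate n).symm c.1.1 ≤ (finRotate n).symm c.1.2 then
    (unrotatePair n c.1, unrotatePair n c.2)
  else (unrotatePair n c.2, unrotatePair n c.1)

lemma mem_crossings {n : ℕ} {V : Finset (Fin n × Fin n)}
    {c : (Fin n × Fin n) × (Fin n × Fin n)} :
    c ∈ crossings n V ↔ c.1 ∈ V ∧ c.2 ∈ V ∧ c.1.1 < c.2.1 ∧ c.2.1 < c.1.2 ∧ c.1.2 < c.2.2 := by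
  simp [crossings, Finset.mem_filter, Finset.mem_product, and_assoc]

section CrossComb
variable {n : ℕ} {c : (Fin n × Fin n) × (Fin n × Fin n)}

/-- The order chain of a crossing. -/
def Chain (n : ℕ) (c : (Fin n × Fin n) × (Fin n × Fin n)) : Prop :=
  c.1.1 < c.2.1 ∧ c.2.1 < c.1.2 ∧ c.1.2 < c.2.2

lemma cyc_eq_of_chain (hc : Chain n c) :
    (Chain n (cyc n c)) ∧
      ((c.2.2.val + 1 = n ∧ cyc n c = (rotatePair n c.2, rotatePair n c.1)) ∨
       (c.2.2.val + 1 ≠ n ∧ cyc n c = (rotatePair n c.1, rotatePair n c.2))) := by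
  obtain ⟨o1, o2, o3⟩ := hc
  have hA : c.1.1.val < c.2.1.val := o1
  have hB : c.2.1.val < c.1.2.val := o2
  have hC : c.1.2.val < c.2.2.val := o3
  have hD : c.2.2.val < n := c.2.2.isLt
  have h1 : c.1.1 < c.1.2 := lt_trans o1 o2
  have h2 : c.2.1 < c.2.2 := lt_trans o2 o3
  have hr1 := rotatePair_val c.1 h1
  rw [if_neg (by omega), Prod.ext_iff] at hr1
  obtain ⟨e11, e12⟩ := hr1
  have hb : (finRotate n c.2.1).val = c.2.1.val + 1 := rotVal_lt _ (by omega)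
  by_cases hw : c.2.2.val + 1 = n
  · have hr2 := rotatePair_val c.2 h2
    rw [if_pos hw, Prod.ext_iff] at hr2
    obtain ⟨e21, e22⟩ := hr2
    have hcond : ¬ (finRotate n c.2.1 ≤ finRotate n c.2.2) := by
      rw [Fin.le_def]
      have : (finRotate n c.2.2).val = 0 := rotVal_last _ hw
      omega
    have hcyc : cyc n c = (rotatePair n c.2, rotatePair n c.1) := by
      rw [cyc, if_neg hcond]
    refine ⟨?_, Or.inl ⟨hw, hcyc⟩⟩
    rw [hcyc, Chain]
    dsimp only
    refine ⟨?_, ?_, ?_⟩ <;> (rw [Fin.lt_def]; omega)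
  · have hr2 := rotatePair_val c.2 h2
    rw [if_neg hw, Prod.ext_iff] at hr2
    obtain ⟨e21, e22⟩ := hr2
    have hd : (finRotate n c.2.2).val = c.2.2.val + 1 := rotVal_lt _ (by omega)
    have hcond : finRotate n c.2.1 ≤ finRotate n c.2.2 := by
      rw [Fin.le_def]; omega
    have hcyc : cyc n c = (rotatePair n c.1, rotatePair n c.2) := by
      rw [cyc, if_pos hcond]
    refine ⟨?_, Or.inr ⟨hw, hcyc⟩⟩
    rw [hcyc, Chain]
    dsimp only
    refine ⟨?_, ?_, ?_⟩ <;> (rw [Fin.lt_def]; omega)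

lemma cycInv_eq_of_chain (hc : Chain n c) :
    (Chain n (cycInv n c)) ∧
      ((c.1.1.val = 0 ∧ cycInv n c = (unrotatePair n c.2, unrotatePair n c.1)) ∨
       (c.1.1.val ≠ 0 ∧ cycInv n c = (unrotatePair n c.1, unrotatePair n c.2))) := by
  obtain ⟨o1, o2, o3⟩ := hc
  have hA : c.1.1.val < c.2.1.val := o1
  have hB : c.2.1.val < c.1.2.val := o2
  have hC : c.1.2.val < c.2.2.val := o3
  have hD : c.2.2.val < n := c.2.2.isLt
  have h1 : c.1.1 < c.1.2 := lt_trans o1 o2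
  have h2 : c.2.1 < c.2.2 := lt_trans o2 o3
  have hu1 := unrotatePair_val c.1 h1
  have hu2 := unrotatePair_val c.2 h2
  rw [if_neg (by omega), Prod.ext_iff] at hu2
  obtain ⟨e21, e22⟩ := hu2
  have hs1 := rotSymmVal c.1.1
  have hs2 := rotSymmVal c.1.2
  rw [if_neg (by omega)] at hs2
  by_cases hw : c.1.1.val = 0
  · rw [if_pos hw, Prod.ext_iff] at hu1
    obtain ⟨e11, e12⟩ := hu1
    rw [if_pos hw] at hs1
    have hcond : ¬ ((finRotate n).symm c.1.1 ≤ (finRotate n).symm c.1.2) := by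
      rw [Fin.le_def]; omega
    have hcyc : cycInv n c = (unrotatePair n c.2, unrotatePair n c.1) := by
      rw [cycInv, if_neg hcond]
    refine ⟨?_, Or.inl ⟨hw, hcyc⟩⟩
    rw [hcyc, Chain]
    dsimp only
    refine ⟨?_, ?_, ?_⟩ <;> (rw [Fin.lt_def]; omega)
  · rw [if_neg hw, Prod.ext_iff] at hu1
    obtain ⟨e11, e12⟩ := hu1
    rw [if_neg hw] at hs1
    have hcond : (finRotate n).symm c.1.1 ≤ (finRotate n).symm c.1.2 := by
      rw [Fin.le_def]; omega
    have hcyc : cycInv n c = (unrotatePair n c.1, unrotatePair n c.2) := by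
      rw [cycInv, if_pos hcond]
    refine ⟨?_, Or.inr ⟨hw, hcyc⟩⟩
    rw [hcyc, Chain]
    dsimp only
    refine ⟨?_, ?_, ?_⟩ <;> (rw [Fin.lt_def]; omega)

end CrossComb

section CrossComb2
variable {n : ℕ} {c : (Fin n × Fin n) × (Fin n × Fin n)}

lemma cycInv_cyc (hc : Chain n c) : cycInv n (cyc n c) = c := by
  obtain ⟨o1, o2, o3⟩ := hc
  have h1 : c.1.1 < c.1.2 := lt_trans o1 o2
  have h2 : c.2.1 < c.2.2 := lt_trans o2 o3
  obtain ⟨hch, hcase⟩ := cyc_eq_of_chain ⟨o1, o2, o3⟩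
  obtain ⟨hch', hcase'⟩ := cycInv_eq_of_chain hch
  rcases hcase with ⟨hw, hcyc⟩ | ⟨hw, hcyc⟩
  · have hv := rotatePair_val c.2 h2
    rw [if_pos (by omega), Prod.ext_iff] at hv
    have h0 : (cyc n c).1.1.val = 0 := by rw [hcyc]; exact hv.1
    rcases hcase' with ⟨_, heq⟩ | ⟨hne, _⟩
    · rw [heq, hcyc]
      simp only
      rw [unrot_rot c.1 h1, unrot_rot c.2 h2]
    · exact absurd h0 hne
  · have hv := rotatePair_val c.1 h1
    rw [if_neg (by
      have : c.1.2.val < c.2.2.val := o3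
      omega), Prod.ext_iff] at hv
    have h0 : (cyc n c).1.1.val = c.1.1.val + 1 := by rw [hcyc]; exact hv.1
    rcases hcase' with ⟨hz, _⟩ | ⟨_, heq⟩
    · omega
    · rw [heq, hcyc]
      simp only
      rw [unrot_rot c.1 h1, unrot_rot c.2 h2]

lemma cyc_cycInv (hc : Chain n c) : cyc n (cycInv n c) = c := by
  obtain ⟨o1, o2, o3⟩ := hc
  have h1 : c.1.1 < c.1.2 := lt_trans o1 o2
  have h2 : c.2.1 < c.2.2 := lt_trans o2 o3
  have hD : c.2.2.val < n := c.2.2.isLt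
  have hAB : c.1.1.val < c.2.1.val := o1
  have hBC : c.2.1.val < c.1.2.val := o2
  have hCD : c.1.2.val < c.2.2.val := o3
  obtain ⟨hch, hcase⟩ := cycInv_eq_of_chain ⟨o1, o2, o3⟩
  obtain ⟨hch', hcase'⟩ := cyc_eq_of_chain hch
  rcases hcase with ⟨hw, hcyc⟩ | ⟨hw, hcyc⟩
  · have hv := unrotatePair_val c.1 h1
    rw [if_pos hw, Prod.ext_iff] at hv
    have h0 : (cycInv n c).2.2.val + 1 = n := by
      rw [hcyc]
      simp only
      simp only at hv
      omega
    rcases hcase' with ⟨_, heq⟩ | ⟨hne, _⟩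
    · rw [heq, hcyc]
      simp only
      rw [rot_unrot c.1 h1, rot_unrot c.2 h2]
    · exact absurd h0 hne
  · have hv := unrotatePair_val c.2 h2
    rw [if_neg (by omega), Prod.ext_iff] at hv
    have h0 : (cycInv n c).2.2.val + 1 ≠ n := by
      rw [hcyc]
      simp only
      simp only at hv
      omega
    rcases hcase' with ⟨hz, _⟩ | ⟨_, heq⟩
    · exact absurd hz h0
    · rw [heq, hcyc]
      simp only
      rw [rot_unrot c.1 h1, rot_unrot c.2 h2]

end CrossComb2

section Mem
variable {n : ℕ} {V : Finset (Fin n × Fin n)}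

lemma ur_mem (hV1 : ∀ p ∈ V, p.1 < p.2) {q : Fin n × Fin n}
    (hq : q ∈ V.image (rotatePair n)) : unrotatePair n q ∈ V := by
  obtain ⟨p, hp, rfl⟩ := Finset.mem_image.mp hq
  rw [unrot_rot p (hV1 p hp)]
  exact hp

lemma chain_of_mem {c : (Fin n × Fin n) × (Fin n × Fin n)} (hc : c ∈ crossings n V) :
    Chain n c := by
  obtain ⟨-, -, h⟩ := mem_crossings.mp hc
  exact h

lemma cyc_mem {c : (Fin n × Fin n) × (Fin n × Fin n)} (hc : c ∈ crossings n V) :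
    cyc n c ∈ crossings n (V.image (rotatePair n)) := by
  obtain ⟨m1, m2, hch⟩ := mem_crossings.mp hc
  obtain ⟨hch', hcase⟩ := cyc_eq_of_chain hch
  rw [mem_crossings]
  refine ⟨?_, ?_, hch'⟩ <;>
    (rcases hcase with ⟨-, heq⟩ | ⟨-, heq⟩ <;> rw [heq] <;>
      exact Finset.mem_image_of_mem _ (by assumption))

lemma cycInv_mem (hV1 : ∀ p ∈ V, p.1 < p.2)
    {c : (Fin n × Fin n) × (Fin n × Fin n)}
    (hc : c ∈ crossings n (V.image (rotatePair n))) :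
    cycInv n c ∈ crossings n V := by
  obtain ⟨m1, m2, hch⟩ := mem_crossings.mp hc
  obtain ⟨hch', hcase⟩ := cycInv_eq_of_chain hch
  rw [mem_crossings]
  refine ⟨?_, ?_, hch'⟩ <;>
    (rcases hcase with ⟨-, heq⟩ | ⟨-, heq⟩ <;> rw [heq] <;>
      exact ur_mem hV1 (by assumption))

end Mem

lemma crossing_prod {n : ℕ} {α : Type*} (Q : α → α → ℝ) (hQs : ∀ a b, Q a b = Q b a)
    (V : Finset (Fin n × Fin n)) (hV1 : ∀ p ∈ V, p.1 < p.2)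
    (x : {p // p ∈ V} → α) :
    ∏ c ∈ (crossings n (V.image (rotatePair n))).attach,
      Q (x ⟨unrotatePair n c.1.1, ur_mem hV1 (mem_crossings.mp c.2).1⟩)
        (x ⟨unrotatePair n c.1.2, ur_mem hV1 (mem_crossings.mp c.2).2.1⟩) =
    ∏ c ∈ (crossings n V).attach,
      Q (x ⟨c.1.1, (mem_crossings.mp c.2).1⟩) (x ⟨c.1.2, (mem_crossings.mp c.2).2.1⟩) := by
  refine Finset.prod_bij' (i := fun a _ => ⟨cycInv n a.1, cycInv_mem hV1 a.2⟩)
    (j := fun b _ => ⟨cyc n b.1, cyc_mem b.2⟩) (fun a _ => Finset.mem_attach _ _)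
    (fun b _ => Finset.mem_attach _ _) ?_ ?_ ?_
  · intro a _
    exact Subtype.ext (cyc_cycInv (chain_of_mem a.2))
  · intro b _
    exact Subtype.ext (cycInv_cyc (chain_of_mem b.2))
  · intro a _
    obtain ⟨hch, hcase⟩ := cycInv_eq_of_chain (chain_of_mem a.2)
    rcases hcase with ⟨-, heq⟩ | ⟨-, heq⟩ <;> simp only [heq]
    · exact hQs _ _

lemma rotatePair_or {n : ℕ} (p : Fin n × Fin n) :
    rotatePair n p = (finRotate n p.1, finRotate n p.2) ∨
      rotatePair n p = (finRotate n p.2, finRotate n p.1) := by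
  by_cases h : finRotate n p.1 ≤ finRotate n p.2
  · left; simp only [rotatePair, h, ↓reduceIte]
  · right; simp only [rotatePair, h, ↓reduceIte]

lemma pairingIntegral_rot (j n : ℕ) (U : Set (EuclideanSpace ℝ (Fin j)))
    (Q : EuclideanSpace ℝ (Fin j) → EuclideanSpace ℝ (Fin j) → ℝ)
    (hQs : ∀ x y, Q x y = Q y x)
    (f : Fin n → (EuclideanSpace ℝ (Fin j) → ℝ))
    (V : Finset (Fin n × Fin n)) (hV : IsPairing n V) :
    pairingIntegral j n U Q f (V.image (rotatePair n)) =
      pairingIntegral j n U Q (fun i => f (finRotate n i)) V := by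
  classical
  set V' := V.image (rotatePair n) with hV'def
  -- the index equivalence
  have hg_inj : Function.Injective
      (fun p : {p // p ∈ V} => (⟨rotatePair n p.1, Finset.mem_image_of_mem _ p.2⟩ :
        {q // q ∈ V'})) := by
    intro a b h
    have hab : rotatePair n a.1 = rotatePair n b.1 := congrArg Subtype.val h
    apply Subtype.ext
    rw [← unrot_rot a.1 (hV.1 _ a.2), ← unrot_rot b.1 (hV.1 _ b.2), hab]
  have hg_surj : Function.Surjective
      (fun p : {p // p ∈ V} => (⟨rotatePair n p.1, Finset.mem_image_of_mem _ p.2⟩ :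
        {q // q ∈ V'})) := by
    rintro ⟨q, hq⟩
    obtain ⟨p, hp, rfl⟩ := Finset.mem_image.mp hq
    exact ⟨⟨p, hp⟩, rfl⟩
  set e : {p // p ∈ V} ≃ {q // q ∈ V'} :=
    Equiv.ofBijective _ ⟨hg_inj, hg_surj⟩ with he
  have he_apply : ∀ p : {p // p ∈ V}, (e p).1 = rotatePair n p.1 := fun p => rfl
  have he_symm : ∀ q : {q // q ∈ V'}, (e.symm q).1 = unrotatePair n q.1 := by
    intro q
    have h1 : rotatePair n (e.symm q).1 = q.1 := by
      have := congrArg Subtype.val (e.apply_symm_apply q)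
      rw [← he_apply (e.symm q)]
      exact this
    rw [← h1, unrot_rot _ (hV.1 _ (e.symm q).2)]
  set φ := MeasurableEquiv.piCongrLeft (fun _ : {q // q ∈ V'} => EuclideanSpace ℝ (Fin j)) e with hφdef
  have hφ : MeasurePreserving φ volume volume :=
    volume_measurePreserving_piCongrLeft (fun _ : {q // q ∈ V'} => EuclideanSpace ℝ (Fin j)) e
  have happ : ∀ (x : {p // p ∈ V} → EuclideanSpace ℝ (Fin j)) (q : {q // q ∈ V'}), φ x q = x (e.symm q) := by
    intro x q
    conv_lhs => rw [← e.apply_symm_apply q]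
    exact MeasurableEquiv.piCongrLeft_apply_apply (β := fun _ => EuclideanSpace ℝ (Fin j)) e x (e.symm q)
  rw [pairingIntegral, pairingIntegral]
  rw [← hφ.setIntegral_preimage_emb φ.measurableEmbedding]
  have hset : φ ⁻¹' {y : {q // q ∈ V'} → EuclideanSpace ℝ (Fin j) | ∀ q, y q ∈ U} =
      {x : {p // p ∈ V} → EuclideanSpace ℝ (Fin j) | ∀ p, x p ∈ U} := by
    ext x
    simp only [Set.mem_preimage, Set.mem_setOf_eq]
    constructor
    · intro h p
      have := h (e p)
      rwa [happ, e.symm_apply_apply] at this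
    · intro h q
      rw [happ]
      exact h _
  rw [hset]
  congr 1
  funext x
  congr 1
  · -- the product of wave functions
    rw [← e.prod_comp]
    refine Finset.prod_congr rfl ?_
    intro p _
    have hx : φ x (e p) = x p := by rw [happ, e.symm_apply_apply]
    rw [hx]
    rcases rotatePair_or p.1 with h | h
    · rw [he_apply p, h]
    · rw [he_apply p, h]
      exact mul_comm _ _
  · -- the product over crossings
    rw [← crossing_prod Q hQs V hV.1 x]
    refine Finset.prod_congr rfl ?_
    intro c _
    have k1 : ∀ (r : Fin n × Fin n) (hr : r ∈ V'),
        φ x ⟨r, hr⟩ = x ⟨unrotatePair n r, ur_mem hV.1 hr⟩ := by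
      intro r hr
      rw [happ]
      have hh : e.symm ⟨r, hr⟩ = ⟨unrotatePair n r, ur_mem hV.1 hr⟩ :=
        Subtype.ext (he_symm ⟨r, hr⟩)
      rw [hh]
    rw [k1 c.1.1 _, k1 c.1.2 _]

lemma image_unrot_rot {n : ℕ} (W : Finset (Fin n × Fin n)) (hW1 : ∀ p ∈ W, p.1 < p.2) :
    (W.image (unrotatePair n)).image (rotatePair n) = W := by
  rw [Finset.image_image]
  calc W.image (rotatePair n ∘ unrotatePair n)
      = W.image id := Finset.image_congr (fun p hp => rot_unrot p (hW1 p hp))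
    _ = W := Finset.image_id

lemma image_rot_unrot {n : ℕ} (W : Finset (Fin n × Fin n)) (hW1 : ∀ p ∈ W, p.1 < p.2) :
    (W.image (rotatePair n)).image (unrotatePair n) = W := by
  rw [Finset.image_image]
  calc W.image (unrotatePair n ∘ rotatePair n)
      = W.image id := Finset.image_congr (fun p hp => unrot_rot p (hW1 p hp))
    _ = W := Finset.image_id

/-- Cyclic invariance of the pair-partition sums (the combinatorial heart of traciality):
for the cyclic permutation `σ(i) = i + 1 (mod n)`, the relabeled pairing `σ(V)` of a pair
partition `V` is again a pair partition, and
the total pairing sum `Σ_{V ∈ P(S)} ∫ f_n(x_n)⋯f_1(x_1) Q_V^n(x) δ_V^n(x) dx`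
for `f` equals the corresponding sum for the cyclically shifted family
`f ∘ σ` (which realizes `Σ_V ∫ f_1(x_1) f_n(x_n) ⋯ f_2(x_2) …`). -/
theorem pairing_sum_cyclic_invariant
    (j n : ℕ) (U : Set (EuclideanSpace ℝ (Fin j))) (hU : IsOpen U) (hUne : U.Nonempty)
    (Q : EuclideanSpace ℝ (Fin j) → EuclideanSpace ℝ (Fin j) → ℝ)
    (hQm : Measurable (fun p : EuclideanSpace ℝ (Fin j) × EuclideanSpace ℝ (Fin j) =>
      Q p.1 p.2))
    (hQbd : ∃ c : ℝ, ∀ x y, |Q x y| ≤ c)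
    (hQs : ∀ x y, Q x y = Q y x)
    (f : Fin n → (EuclideanSpace ℝ (Fin j) → ℝ))
    (hfc : ∀ i, Continuous (f i)) (hfs : ∀ i, HasCompactSupport (f i))
    (hfU : ∀ i, Function.support (f i) ⊆ U) :
    (∀ V : Finset (Fin n × Fin n), IsPairing n V →
      IsPairing n (V.image (rotatePair n))) ∧
    ∑ V ∈ Finset.univ.filter (fun V => IsPairing n V), pairingIntegral j n U Q f V =
      ∑ V ∈ Finset.univ.filter (fun V => IsPairing n V),
        pairingIntegral j n U Q (fun i => f (finRotate n i)) V := by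
  constructor
  · intro V hV
    exact pairing_image_perm (finRotate n) (rotatePair n) (fun p => rfl) V hV
  · have key : ∀ W, IsPairing n W → pairingIntegral j n U Q f W =
        pairingIntegral j n U Q (fun i => f (finRotate n i)) (W.image (unrotatePair n)) := by
      intro W hW
      have h1 : IsPairing n (W.image (unrotatePair n)) :=
        pairing_image_perm (finRotate n).symm (unrotatePair n) (fun p => rfl) W hW
      have h2 := pairingIntegral_rot j n U Q hQs f (W.image (unrotatePair n)) h1
      rwa [image_unrot_rot W hW.1] at h2
    refine Finset.sum_bij' (fun W _ => W.image (unrotatePair n))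
      (fun V _ => V.image (rotatePair n)) ?_ ?_ ?_ ?_ ?_
    · intro W hW
      rw [Finset.mem_filter] at hW ⊢
      exact ⟨Finset.mem_univ _,
        pairing_image_perm (finRotate n).symm (unrotatePair n) (fun p => rfl) W hW.2⟩
    · intro V hVm
      rw [Finset.mem_filter] at hVm ⊢
      exact ⟨Finset.mem_univ _,
        pairing_image_perm (finRotate n) (rotatePair n) (fun p => rfl) V hVm.2⟩
    · intro W hW
      rw [Finset.mem_filter] at hW
      exact image_unrot_rot W hW.2.1
    · intro V hVm
      rw [Finset.mem_filter] at hVm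
      exact image_rot_unrot V hVm.2.1
    · intro W hW
      rw [Finset.mem_filter] at hW
      exact key W hW.2


end
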